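/- arXiv:1412.2627 — 7 statements merged into one kernel-verified Lean document; each statement's English description precedes it below -/
import Mathlib

section
/- Let E be a measurable space, let (Q_{s,t})_{0≤s≤t} be an evolution operator of sub-Markov kernels on E, fix T > 0, and assume Q_{s,T}1(x) > 0 for all x ∈ E and all 0 ≤ s ≤ T. For 0 ≤ s ≤ t ≤ T define R^T_{s,t}f(x) = Q_{s,t}(f · Q_{t,T}1)(x) / Q_{s,T}1(x) for bounded measurable f : E → ℝ. Then (R^T_{s,t}) is itself an evolution operator of Markov kernels: for all 0 ≤ u ≤ s ≤ t ≤ T, every x ∈ E and every bounded measurable f, R^T_{u,s}(R^T_{s,t} f)(x) = R^T_{u,t} f(x), and moreover R^T_{s,t}1(x) = 1 for all x ∈ E. -/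
open MeasureTheory ProbabilityTheory
open scoped ENNReal

/-- For an evolution operator `(Q_{s,t})` of sub-Markov kernels with
`Q_{s,T}1 > 0`, the conditioned operators `R^T_{s,t}f = Q_{s,t}(f · Q_{t,T}1)/Q_{s,T}1`
form an evolution operator of Markov kernels. -/
theorem conditioned_evolution_operator
    {E : Type*} [MeasurableSpace E]
    (Q : ℝ → ℝ → Kernel E E)
    (hsub : ∀ s t, 0 ≤ s → s ≤ t → ∀ x, Q s t x Set.univ ≤ 1)
    (hev : ∀ u s t, 0 ≤ u → u ≤ s → s ≤ t →
      ∀ f : E → ℝ, Measurable f → (∃ C, ∀ y, |f y| ≤ C) →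
      ∀ x, ∫ y, (∫ z, f z ∂(Q s t y)) ∂(Q u s x) = ∫ z, f z ∂(Q u t x))
    (T : ℝ) (hT : 0 < T)
    (hpos : ∀ s, 0 ≤ s → s ≤ T → ∀ x, 0 < (Q s T x Set.univ).toReal)
    (R : ℝ → ℝ → (E → ℝ) → E → ℝ)
    (hR : ∀ s t (f : E → ℝ) (x : E), R s t f x =
      (∫ y, f y * (Q t T y Set.univ).toReal ∂(Q s t x)) / (Q s T x Set.univ).toReal) :
    ∀ u s t, 0 ≤ u → u ≤ s → s ≤ t → t ≤ T →
      (∀ f : E → ℝ, Measurable f → (∃ C, ∀ y, |f y| ≤ C) →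
        ∀ x, R u s (fun y => R s t f y) x = R u t f x) ∧
      (∀ x : E, R s t (fun _ => (1 : ℝ)) x = 1) := by
  intro u s t hu hus hst htT
  have hmQ : ∀ r, Measurable (fun z : E => (Q r T z Set.univ).toReal) :=
    fun r => (Kernel.measurable_coe (Q r T) MeasurableSet.univ).ennreal_toReal
  have hbQ : ∀ r, 0 ≤ r → r ≤ T → ∀ z : E, (Q r T z Set.univ).toReal ≤ 1 := by
    intro r hr hrT z
    calc (Q r T z Set.univ).toReal ≤ (1 : ℝ≥0∞).toReal :=
          ENNReal.toReal_mono ENNReal.one_ne_top (hsub r T hr hrT z)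
      _ = 1 := ENNReal.toReal_one
  have hnnQ : ∀ r (z : E), 0 ≤ (Q r T z Set.univ).toReal := fun r z => ENNReal.toReal_nonneg
  constructor
  · intro f hf ⟨C, hC⟩ x
    set g : E → ℝ := fun z => f z * (Q t T z Set.univ).toReal with hg
    have hgm : Measurable g := hf.mul (hmQ t)
    have hgb : ∃ C, ∀ y, |g y| ≤ C := by
      refine ⟨C, fun y => ?_⟩
      have hC0 : (0 : ℝ) ≤ C := le_trans (abs_nonneg _) (hC y)
      calc |g y| = |f y| * |(Q t T y Set.univ).toReal| := abs_mul _ _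
        _ ≤ C * 1 := by
            apply mul_le_mul (hC y) _ (abs_nonneg _) hC0
            rw [abs_of_nonneg (hnnQ t y)]
            exact hbQ t (le_trans hu (le_trans hus hst)) htT y
        _ = C := mul_one C
    have key := hev u s t hu hus hst g hgm hgb x
    have hint : ∀ y : E, R s t f y * (Q s T y Set.univ).toReal = ∫ z, g z ∂(Q s t y) := by
      intro y
      rw [hR]
      exact div_mul_cancel₀ _ (ne_of_gt (hpos s (le_trans hu hus) (le_trans hst htT) y))
    rw [hR, hR]
    congr 1
    calc ∫ y, R s t f y * (Q s T y Set.univ).toReal ∂(Q u s x)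
        = ∫ y, (∫ z, g z ∂(Q s t y)) ∂(Q u s x) := by
          exact integral_congr_ae (Filter.Eventually.of_forall hint)
      _ = ∫ z, g z ∂(Q u t x) := key
  · intro x
    have key := hev s t T (le_trans hu hus) hst htT (fun _ => (1 : ℝ)) measurable_const
      ⟨1, fun y => by simp⟩ x
    simp only [integral_const, smul_eq_mul, mul_one] at key
    rw [hR]
    simp only [one_mul]
    simp only [measureReal_def] at key
    rw [key]
    exact div_self (ne_of_gt (hpos s (le_trans hu hus) (le_trans hst htT) x))
end

section
/- Let R be a Markov kernel on a measurable space E and let β ∈ [0,1] be such that for every pair (x,y) ∈ E × E there exists a probability measure η^{x,y} on E with R(x,A) ≥ β η^{x,y}(A) and R(y,A) ≥ β η^{x,y}(A) for every measurable A ⊆ E. Then for every pair of mutually singular probability measures μ₁, μ₂ on E, ‖μ₁R − μ₂R‖_TV ≤ (1 − β)‖μ₁ − μ₂‖_TV. -/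
open MeasureTheory ProbabilityTheory

/-- Total variation distance between two measures, defined as the supremum of
`|∫ f dμ − ∫ f dν|` over measurable functions `f` with `‖f‖∞ ≤ 1`. -/
noncomputable def tvDist {E : Type*} [MeasurableSpace E] (μ ν : Measure E) : ℝ :=
  ⨆ f : {f : E → ℝ // Measurable f ∧ ∀ x, |f x| ≤ 1},
    |(∫ x, f.1 x ∂μ) - ∫ x, f.1 x ∂ν|

private lemma integrable_of_abs_le_one {E : Type*} [MeasurableSpace E]
    (μ : Measure E) [IsFiniteMeasure μ] {f : E → ℝ}
    (hf : Measurable f) (hb : ∀ x, |f x| ≤ 1) : Integrable f μ :=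
  (integrable_const (1 : ℝ)).mono' hf.aestronglyMeasurable
    (Filter.Eventually.of_forall fun x => by simpa [Real.norm_eq_abs] using hb x)

private lemma abs_integral_le_one {E : Type*} [MeasurableSpace E]
    (μ : Measure E) [IsProbabilityMeasure μ] {f : E → ℝ}
    (hb : ∀ x, |f x| ≤ 1) : |∫ x, f x ∂μ| ≤ 1 := by
  have := norm_integral_le_of_norm_le_const (μ := μ) (f := f) (C := 1)
    (Filter.Eventually.of_forall fun x => by simpa [Real.norm_eq_abs] using hb x)
  simpa [Real.norm_eq_abs, measure_univ] using this

/-- If a Markov kernel `R` admits, for every pair `(x,y)`, a common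
minorizing probability measure with mass `β`, then for mutually singular probability
measures `μ₁, μ₂`: `‖μ₁R − μ₂R‖_TV ≤ (1 − β)‖μ₁ − μ₂‖_TV`. -/
theorem tv_contraction_of_minorization_singular
    {E : Type*} [MeasurableSpace E]
    (R : Kernel E E) [IsMarkovKernel R]
    (β : ℝ) (hβ0 : 0 ≤ β) (hβ1 : β ≤ 1)
    (hmin : ∀ x y : E, ∃ η : Measure E, IsProbabilityMeasure η ∧
      (∀ A : Set E, MeasurableSet A → ENNReal.ofReal β * η A ≤ R x A) ∧
      (∀ A : Set E, MeasurableSet A → ENNReal.ofReal β * η A ≤ R y A))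
    (μ₁ μ₂ : Measure E) [IsProbabilityMeasure μ₁] [IsProbabilityMeasure μ₂]
    (hsing : μ₁ ⟂ₘ μ₂) :
    tvDist (μ₁.bind (fun a => R a)) (μ₂.bind (fun a => R a)) ≤ (1 - β) * tvDist μ₁ μ₂ := by
  classical
  -- Key pointwise bound: for any bounded measurable f and any x, y,
  -- |∫ f d(R x) - ∫ f d(R y)| ≤ 2 * (1 - β).
  have key : ∀ (f : E → ℝ), Measurable f → (∀ x, |f x| ≤ 1) →
      ∀ x y : E, |(∫ z, f z ∂(R x)) - ∫ z, f z ∂(R y)| ≤ 2 * (1 - β) := by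
    intro f hf hb x y
    obtain ⟨η, hη, h1, h2⟩ := hmin x y
    set m : Measure E := ENNReal.ofReal β • η with hm
    have hfinm : IsFiniteMeasure m := by
      constructor
      simp only [hm, Measure.smul_apply, smul_eq_mul, measure_univ, mul_one]
      exact ENNReal.ofReal_lt_top
    have aux : ∀ (ν : Measure E), IsProbabilityMeasure ν → m ≤ ν →
        (∫ z, f z ∂ν = ∫ z, f z ∂(ν - m) + ∫ z, f z ∂m) ∧
        |∫ z, f z ∂(ν - m)| ≤ 1 - β := by
      intro ν hν hle
      haveI := hν
      haveI : IsFiniteMeasure (ν - m) := isFiniteMeasure_of_le ν Measure.sub_le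
      constructor
      · conv_lhs => rw [← Measure.sub_add_cancel_of_le hle]
        exact integral_add_measure (integrable_of_abs_le_one _ hf hb)
          (integrable_of_abs_le_one _ hf hb)
      · have hmass : ((ν - m) Set.univ).toReal = 1 - β := by
          rw [Measure.sub_apply MeasurableSet.univ hle]
          simp only [measure_univ, hm, Measure.smul_apply, smul_eq_mul, mul_one]
          rw [ENNReal.toReal_sub_of_le (ENNReal.ofReal_le_one.mpr hβ1) ENNReal.one_ne_top]
          simp [ENNReal.toReal_ofReal hβ0]
        have := norm_integral_le_of_norm_le_const (μ := ν - m) (f := f) (C := 1)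
          (Filter.Eventually.of_forall fun z => by simpa [Real.norm_eq_abs] using hb z)
        rw [measureReal_def, hmass] at this
        simpa [Real.norm_eq_abs] using this
    have hmx : m ≤ R x := Measure.le_iff.mpr fun s hs => by
      simpa [hm, Measure.smul_apply, smul_eq_mul] using h1 s hs
    have hmy : m ≤ R y := Measure.le_iff.mpr fun s hs => by
      simpa [hm, Measure.smul_apply, smul_eq_mul] using h2 s hs
    obtain ⟨hxeq, hxb⟩ := aux (R x) inferInstance hmx
    obtain ⟨hyeq, hyb⟩ := aux (R y) inferInstance hmy
    rw [hxeq, hyeq]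
    have : (∫ z, f z ∂(R x - m)) + (∫ z, f z ∂m) - ((∫ z, f z ∂(R y - m)) + ∫ z, f z ∂m)
        = (∫ z, f z ∂(R x - m)) - ∫ z, f z ∂(R y - m) := by ring
    rw [this]
    calc |(∫ z, f z ∂(R x - m)) - ∫ z, f z ∂(R y - m)|
        ≤ |∫ z, f z ∂(R x - m)| + |∫ z, f z ∂(R y - m)| := abs_sub _ _
      _ ≤ (1 - β) + (1 - β) := add_le_add hxb hyb
      _ = 2 * (1 - β) := by ring
  -- measurability of x ↦ ∫ f d(R x)
  have hg_meas : ∀ (f : E → ℝ), Measurable f →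
      Measurable (fun x => ∫ y, f y ∂(R x)) := by
    intro f hf
    exact ((hf.comp measurable_snd).stronglyMeasurable.integral_kernel_prod_right'
      (κ := R)).measurable
  -- bound on x ↦ ∫ f d(R x)
  have hg_bdd : ∀ (f : E → ℝ), (∀ z, |f z| ≤ 1) → ∀ x, |∫ y, f y ∂(R x)| ≤ 1 := by
    intro f hb x
    exact abs_integral_le_one (R x) hb
  -- integral against bind
  have hbind : ∀ (μ : Measure E), IsProbabilityMeasure μ → ∀ (f : E → ℝ), Measurable f →
      (∀ z, |f z| ≤ 1) →
      ∫ z, f z ∂(μ.bind (fun a => R a)) = ∫ x, ∫ y, f y ∂(R x) ∂μ := by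
    intro μ hμ f hf hb
    haveI := hμ
    have hbs : μ.bind (fun a => R a) = (μ ⊗ₘ R).snd := by
      ext s hs
      rw [Measure.bind_apply hs (Kernel.measurable R).aemeasurable,
        Measure.snd_apply hs, Measure.compProd_apply (measurable_snd hs)]
      rfl
    have hsnd : (μ ⊗ₘ R).snd = (μ ⊗ₘ R).map Prod.snd := rfl
    rw [hbs, hsnd, integral_map measurable_snd.aemeasurable hf.aestronglyMeasurable]
    exact Measure.integral_compProd
      (integrable_of_abs_le_one (μ ⊗ₘ R) (hf.comp measurable_snd) (fun p => hb p.2))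
  -- tvDist μ₁ μ₂ ≥ 2 (from mutual singularity)
  have hbdd_tv : BddAbove (Set.range fun f : {f : E → ℝ // Measurable f ∧ ∀ x, |f x| ≤ 1} =>
      |(∫ x, f.1 x ∂μ₁) - ∫ x, f.1 x ∂μ₂|) := by
    refine ⟨2, ?_⟩
    rintro r ⟨⟨f, hf, hb⟩, rfl⟩
    calc |(∫ x, f x ∂μ₁) - ∫ x, f x ∂μ₂|
        ≤ |∫ x, f x ∂μ₁| + |∫ x, f x ∂μ₂| := abs_sub _ _
      _ ≤ 1 + 1 := add_le_add (abs_integral_le_one μ₁ hb) (abs_integral_le_one μ₂ hb)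
      _ = 2 := by norm_num
  have htv2 : 2 ≤ tvDist μ₁ μ₂ := by
    obtain ⟨s, hs, h1s, h2s⟩ := hsing
    set f : E → ℝ := fun x => if x ∈ s then (-1 : ℝ) else 1 with hfdef
    have hfm : Measurable f := Measurable.ite hs measurable_const measurable_const
    have hfb : ∀ x, |f x| ≤ 1 := by
      intro x; by_cases hx : x ∈ s <;> simp [hfdef, hx]
    have hI1 : ∫ x, f x ∂μ₁ = 1 := by
      have hae : ∀ᵐ x ∂μ₁, f x = 1 := by
        have : ∀ᵐ x ∂μ₁, x ∉ s := by
          rw [MeasureTheory.ae_iff]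
          simpa using h1s
        filter_upwards [this] with x hx
        simp [hfdef, hx]
      rw [integral_congr_ae hae]
      simp
    have hI2 : ∫ x, f x ∂μ₂ = -1 := by
      have hae : ∀ᵐ x ∂μ₂, f x = -1 := by
        have : ∀ᵐ x ∂μ₂, x ∈ s := by
          rw [MeasureTheory.ae_iff]
          exact h2s
        filter_upwards [this] with x hx
        simp [hfdef, hx]
      rw [integral_congr_ae hae]
      simp
    have : |(∫ x, f x ∂μ₁) - ∫ x, f x ∂μ₂| = 2 := by
      rw [hI1, hI2]; norm_num
    calc (2 : ℝ) = |(∫ x, f x ∂μ₁) - ∫ x, f x ∂μ₂| := this.symm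
      _ ≤ tvDist μ₁ μ₂ := le_ciSup hbdd_tv ⟨f, hfm, hfb⟩
  -- Main bound: LHS ≤ 2 * (1 - β)
  haveI : Nonempty {f : E → ℝ // Measurable f ∧ ∀ x, |f x| ≤ 1} :=
    ⟨⟨fun _ => 0, measurable_const, fun x => by norm_num⟩⟩
  have hmain : tvDist (μ₁.bind (fun a => R a)) (μ₂.bind (fun a => R a)) ≤ 2 * (1 - β) := by
    apply ciSup_le
    rintro ⟨f, hf, hb⟩
    simp only
    set g : E → ℝ := fun x => ∫ y, f y ∂(R x) with hgdef
    have hgm : Measurable g := hg_meas f hf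
    have hgb : ∀ x, |g x| ≤ 1 := hg_bdd f hb
    rw [hbind μ₁ inferInstance f hf hb, hbind μ₂ inferInstance f hf hb]
    have hc : (∫ x, g x ∂μ₁) - ∫ x, g x ∂μ₂ = ∫ x, (g x - ∫ y, g y ∂μ₂) ∂μ₁ := by
      rw [integral_sub (integrable_of_abs_le_one μ₁ hgm hgb) (integrable_const _),
        integral_const]
      simp [measure_univ]
    have hpt : ∀ x, |g x - ∫ y, g y ∂μ₂| ≤ 2 * (1 - β) := by
      intro x
      have heq : g x - ∫ y, g y ∂μ₂ = ∫ y, (g x - g y) ∂μ₂ := by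
        rw [integral_sub (integrable_const _) (integrable_of_abs_le_one μ₂ hgm hgb),
          integral_const]
        simp [measure_univ]
      rw [heq]
      have := norm_integral_le_of_norm_le_const (μ := μ₂)
        (f := fun y => g x - g y) (C := 2 * (1 - β))
        (Filter.Eventually.of_forall fun y => by
          simpa [Real.norm_eq_abs] using key f hf hb x y)
      simpa [Real.norm_eq_abs, measure_univ] using this
    rw [hc]
    have := norm_integral_le_of_norm_le_const (μ := μ₁)
      (f := fun x => g x - ∫ y, g y ∂μ₂) (C := 2 * (1 - β))
      (Filter.Eventually.of_forall fun x => by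
        simpa [Real.norm_eq_abs] using hpt x)
    simpa [Real.norm_eq_abs, measure_univ] using this
  calc tvDist (μ₁.bind (fun a => R a)) (μ₂.bind (fun a => R a))
      ≤ 2 * (1 - β) := hmain
    _ = (1 - β) * 2 := by ring
    _ ≤ (1 - β) * tvDist μ₁ μ₂ :=
        mul_le_mul_of_nonneg_left htv2 (by linarith)
end

section
/- Let Q be a sub-Markov kernel on a measurable space E with Q1(x) > 0 for every x ∈ E, and let ε ≥ 0 be such that for all x, y ∈ E, ‖Q(x,·)/Q1(x) − Q(y,·)/Q1(y)‖_TV ≤ ε. Then for every pair of probability measures μ, ν on E one has μQ(E) > 0, νQ(E) > 0, and ‖(μQ)/(μQ(E)) − (νQ)/(νQ(E))‖_TV ≤ ε. -/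
open MeasureTheory ProbabilityTheory

section Aux

variable {E : Type*} [MeasurableSpace E]

lemma aux_integrable_of_bound {ρ : Measure E} [IsFiniteMeasure ρ] {f : E → ℝ} {C : ℝ}
    (hfm : Measurable f) (hfb : ∀ x, |f x| ≤ C) : Integrable f ρ :=
  (integrable_const C).mono' hfm.aestronglyMeasurable
    (Filter.Eventually.of_forall fun x => by simpa using hfb x)

lemma aux_abs_integral_le {P : Measure E} [IsFiniteMeasure P] {f : E → ℝ}
    (hb : ∀ x, |f x| ≤ 1) : |∫ x, f x ∂P| ≤ (P Set.univ).toReal := by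
  have := norm_integral_le_of_norm_le_const (μ := P) (f := f) (C := 1)
    (Filter.Eventually.of_forall fun x => by simpa using hb x)
  simpa [Measure.real] using this

lemma aux_tv_bddAbove (P P' : Measure E) [IsProbabilityMeasure P] [IsProbabilityMeasure P'] :
    BddAbove (Set.range fun f : {f : E → ℝ // Measurable f ∧ ∀ x, |f x| ≤ 1} =>
      |(∫ x, f.1 x ∂P) - ∫ x, f.1 x ∂P'|) := by
  refine ⟨2, ?_⟩
  rintro r ⟨⟨f, hfm, hfb⟩, rfl⟩
  have h1 := aux_abs_integral_le (P := P) hfb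
  have h2 := aux_abs_integral_le (P := P') hfb
  simp only [measure_univ, ENNReal.toReal_one] at h1 h2
  calc |(∫ x, f x ∂P) - ∫ x, f x ∂P'| ≤ |∫ x, f x ∂P| + |∫ x, f x ∂P'| := abs_sub _ _
    _ ≤ 2 := by linarith

lemma aux_bind_univ (Q : Kernel E E) (ρ : Measure E) :
    (ρ.bind (fun a => Q a)) Set.univ = ∫⁻ x, Q x Set.univ ∂ρ :=
  Measure.bind_apply MeasurableSet.univ Q.measurable.aemeasurable

lemma aux_bind_univ_pos (Q : Kernel E E) (hpos : ∀ x, 0 < Q x Set.univ)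
    (ρ : Measure E) [IsProbabilityMeasure ρ] :
    0 < (ρ.bind (fun a => Q a)) Set.univ := by
  rw [aux_bind_univ]
  rw [lintegral_pos_iff_support (Q.measurable_coe MeasurableSet.univ)]
  have hs : (Function.support fun x => Q x Set.univ) = Set.univ :=
    Set.eq_univ_of_forall fun x => by
      simp only [Function.mem_support]
      exact (hpos x).ne'
  rw [hs]
  simp

lemma aux_bind_univ_le_one (Q : Kernel E E) (hsub : ∀ x, Q x Set.univ ≤ 1)
    (ρ : Measure E) [IsProbabilityMeasure ρ] :
    (ρ.bind (fun a => Q a)) Set.univ ≤ 1 := by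
  rw [aux_bind_univ]
  calc ∫⁻ x, Q x Set.univ ∂ρ ≤ ∫⁻ _, 1 ∂ρ := lintegral_mono hsub
    _ = 1 := by simp

lemma aux_bind_univ_toReal (Q : Kernel E E) (hsub : ∀ x, Q x Set.univ ≤ 1)
    (ρ : Measure E) :
    ((ρ.bind (fun a => Q a)) Set.univ).toReal = ∫ x, (Q x Set.univ).toReal ∂ρ := by
  rw [aux_bind_univ,
    ← integral_toReal (Q.measurable_coe MeasurableSet.univ).aemeasurable
      (Filter.Eventually.of_forall fun x => (hsub x).trans_lt ENNReal.one_lt_top)]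

lemma aux_integral_bind (Q : Kernel E E) (hsub : ∀ x, Q x Set.univ ≤ 1)
    (ρ : Measure E) [IsProbabilityMeasure ρ] {f : E → ℝ}
    (hfm : Measurable f) (hfb : ∀ x, |f x| ≤ 1) :
    ∫ z, f z ∂(ρ.bind (fun a => Q a)) = ∫ x, ∫ y, f y ∂(Q x) ∂ρ := by
  haveI hQfin : IsFiniteKernel Q := ⟨⟨1, ENNReal.one_lt_top, hsub⟩⟩
  haveI hbfin : IsFiniteMeasure (ρ.bind (fun a => Q a)) := by
    refine ⟨?_⟩
    exact (aux_bind_univ_le_one Q hsub ρ).trans_lt ENNReal.one_lt_top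
  have hfp : Measurable fun y => ENNReal.ofReal (f y) := hfm.ennreal_ofReal
  have hfn : Measurable fun y => ENNReal.ofReal (-f y) := hfm.neg.ennreal_ofReal
  -- bounds on the pointwise lintegrals
  have hboundp : ∀ x, ∫⁻ y, ENNReal.ofReal (f y) ∂(Q x) ≤ 1 := by
    intro x
    calc ∫⁻ y, ENNReal.ofReal (f y) ∂(Q x) ≤ ∫⁻ _, 1 ∂(Q x) := by
          refine lintegral_mono fun y => ?_
          exact ENNReal.ofReal_le_one.mpr ((le_abs_self _).trans (hfb y))
      _ = Q x Set.univ := by simp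
      _ ≤ 1 := hsub x
  have hboundn : ∀ x, ∫⁻ y, ENNReal.ofReal (-f y) ∂(Q x) ≤ 1 := by
    intro x
    calc ∫⁻ y, ENNReal.ofReal (-f y) ∂(Q x) ≤ ∫⁻ _, 1 ∂(Q x) := by
          refine lintegral_mono fun y => ?_
          exact ENNReal.ofReal_le_one.mpr ((neg_le_abs _).trans (hfb y))
      _ = Q x Set.univ := by simp
      _ ≤ 1 := hsub x
  have hmp : Measurable fun x => ∫⁻ y, ENNReal.ofReal (f y) ∂(Q x) :=
    Measurable.lintegral_kernel hfp
  have hmn : Measurable fun x => ∫⁻ y, ENNReal.ofReal (-f y) ∂(Q x) :=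
    Measurable.lintegral_kernel hfn
  -- pointwise decomposition of the inner integral
  have hg_eq : ∀ x, ∫ y, f y ∂(Q x) =
      (∫⁻ y, ENNReal.ofReal (f y) ∂(Q x)).toReal -
        (∫⁻ y, ENNReal.ofReal (-f y) ∂(Q x)).toReal := fun x =>
    integral_eq_lintegral_pos_part_sub_lintegral_neg_part (aux_integrable_of_bound hfm hfb)
  -- decomposition of the outer integral
  have hLHS : ∫ z, f z ∂(ρ.bind (fun a => Q a)) =
      (∫⁻ x, ∫⁻ y, ENNReal.ofReal (f y) ∂(Q x) ∂ρ).toReal -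
        (∫⁻ x, ∫⁻ y, ENNReal.ofReal (-f y) ∂(Q x) ∂ρ).toReal := by
    rw [integral_eq_lintegral_pos_part_sub_lintegral_neg_part
        (aux_integrable_of_bound hfm hfb),
      Measure.lintegral_bind Q.measurable.aemeasurable hfp.aemeasurable,
      Measure.lintegral_bind Q.measurable.aemeasurable hfn.aemeasurable]
  rw [hLHS]
  have hintp : Integrable (fun x => (∫⁻ y, ENNReal.ofReal (f y) ∂(Q x)).toReal) ρ := by
    refine aux_integrable_of_bound (C := 1) hmp.ennreal_toReal fun x => ?_
    rw [abs_of_nonneg ENNReal.toReal_nonneg]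
    exact ENNReal.toReal_le_of_le_ofReal zero_le_one (by simpa using hboundp x)
  have hintn : Integrable (fun x => (∫⁻ y, ENNReal.ofReal (-f y) ∂(Q x)).toReal) ρ := by
    refine aux_integrable_of_bound (C := 1) hmn.ennreal_toReal fun x => ?_
    rw [abs_of_nonneg ENNReal.toReal_nonneg]
    exact ENNReal.toReal_le_of_le_ofReal zero_le_one (by simpa using hboundn x)
  have h1 : ∫ x, (∫⁻ y, ENNReal.ofReal (f y) ∂(Q x)).toReal ∂ρ =
      (∫⁻ x, ∫⁻ y, ENNReal.ofReal (f y) ∂(Q x) ∂ρ).toReal :=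
    integral_toReal hmp.aemeasurable
      (Filter.Eventually.of_forall fun x => (hboundp x).trans_lt ENNReal.one_lt_top)
  have h2 : ∫ x, (∫⁻ y, ENNReal.ofReal (-f y) ∂(Q x)).toReal ∂ρ =
      (∫⁻ x, ∫⁻ y, ENNReal.ofReal (-f y) ∂(Q x) ∂ρ).toReal :=
    integral_toReal hmn.aemeasurable
      (Filter.Eventually.of_forall fun x => (hboundn x).trans_lt ENNReal.one_lt_top)
  rw [← h1, ← h2, ← integral_sub hintp hintn]
  exact (integral_congr_ae (Filter.Eventually.of_forall fun x => hg_eq x)).symm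

/-- The key averaging bound: the normalized `w`-weighted average of a function bounded
by `ε` is bounded by `ε`. -/
lemma aux_weighted_bound {ρ : Measure E} [IsProbabilityMeasure ρ] {w u : E → ℝ} {ε : ℝ}
    (hwm : Measurable w) (hw0 : ∀ x, 0 ≤ w x) (hw1 : ∀ x, w x ≤ 1)
    (hc : 0 < ∫ x, w x ∂ρ) (hε : 0 ≤ ε)
    (hum : Measurable u) (hub : ∀ x, |u x| ≤ ε) :
    |(∫ x, w x ∂ρ)⁻¹ * ∫ x, w x * u x ∂ρ| ≤ ε := by
  set c := ∫ x, w x ∂ρ with hcdef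
  have hwb : ∀ x, |w x| ≤ 1 := fun x => by rw [abs_of_nonneg (hw0 x)]; exact hw1 x
  have hintwu : Integrable (fun x => w x * u x) ρ := by
    refine aux_integrable_of_bound (hwm.mul hum) (C := ε) fun x => ?_
    rw [abs_mul]
    calc |w x| * |u x| ≤ 1 * ε := by
          exact mul_le_mul (hwb x) (hub x) (abs_nonneg _) zero_le_one
      _ = ε := one_mul ε
  have hintw : Integrable w ρ := aux_integrable_of_bound hwm hwb
  have habs : |∫ x, w x * u x ∂ρ| ≤ ε * c := by
    calc |∫ x, w x * u x ∂ρ| ≤ ∫ x, |w x * u x| ∂ρ := by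
          simpa only [Real.norm_eq_abs] using
            norm_integral_le_integral_norm (μ := ρ) (fun x => w x * u x)
      _ ≤ ∫ x, w x * ε ∂ρ := by
          refine integral_mono hintwu.abs (hintw.mul_const ε) fun x => ?_
          rw [abs_mul, abs_of_nonneg (hw0 x)]
          exact mul_le_mul_of_nonneg_left (hub x) (hw0 x)
      _ = c * ε := integral_mul_const ε w
      _ = ε * c := mul_comm _ _
  rw [abs_mul, abs_of_nonneg (inv_nonneg.mpr hc.le)]
  calc c⁻¹ * |∫ x, w x * u x ∂ρ| ≤ c⁻¹ * (ε * c) := by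
        exact mul_le_mul_of_nonneg_left habs (inv_nonneg.mpr hc.le)
    _ = ε := by field_simp
end Aux

/-- If the normalized kernels `Q(x,·)/Q1(x)` are pairwise within TV
distance `ε`, then the normalized measures `(μQ)/(μQ(E))` and `(νQ)/(νQ(E))` are
within TV distance `ε` for all probability measures `μ, ν`, and the normalizations
are positive. -/
theorem tv_normalized_kernel_to_measures
    {E : Type*} [MeasurableSpace E]
    (Q : Kernel E E)
    (hsub : ∀ x, Q x Set.univ ≤ 1)
    (hpos : ∀ x, 0 < Q x Set.univ)
    (ε : ℝ) (hε : 0 ≤ ε)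
    (h : ∀ x y : E,
      tvDist ((Q x Set.univ)⁻¹ • Q x) ((Q y Set.univ)⁻¹ • Q y) ≤ ε)
    (μ ν : Measure E) [IsProbabilityMeasure μ] [IsProbabilityMeasure ν] :
    0 < (μ.bind (fun a => Q a)) Set.univ ∧
    0 < (ν.bind (fun a => Q a)) Set.univ ∧
    tvDist (((μ.bind (fun a => Q a)) Set.univ)⁻¹ • μ.bind (fun a => Q a))
           (((ν.bind (fun a => Q a)) Set.univ)⁻¹ • ν.bind (fun a => Q a)) ≤ ε := by
  haveI hQfin : IsFiniteKernel Q := ⟨⟨1, ENNReal.one_lt_top, hsub⟩⟩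
  have hQne : ∀ x, Q x Set.univ ≠ 0 := fun x => (hpos x).ne'
  have hQnt : ∀ x, Q x Set.univ ≠ ⊤ := fun x => ((hsub x).trans_lt ENNReal.one_lt_top).ne
  set w : E → ℝ := fun x => (Q x Set.univ).toReal with hw_def
  have hw_meas : Measurable w := (Q.measurable_coe MeasurableSet.univ).ennreal_toReal
  have hw_pos : ∀ x, 0 < w x := fun x => ENNReal.toReal_pos (hQne x) (hQnt x)
  have hw_le1 : ∀ x, w x ≤ 1 := fun x => by
    simpa using ENNReal.toReal_mono ENNReal.one_ne_top (hsub x)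
  refine ⟨aux_bind_univ_pos Q hpos μ, aux_bind_univ_pos Q hpos ν, ?_⟩
  -- positive normalization constants
  have hcμ : 0 < (((μ.bind (fun a => Q a)) Set.univ).toReal) :=
    ENNReal.toReal_pos (aux_bind_univ_pos Q hpos μ).ne'
      ((aux_bind_univ_le_one Q hsub μ).trans_lt ENNReal.one_lt_top).ne
  have hcν : 0 < (((ν.bind (fun a => Q a)) Set.univ).toReal) :=
    ENNReal.toReal_pos (aux_bind_univ_pos Q hpos ν).ne'
      ((aux_bind_univ_le_one Q hsub ν).trans_lt ENNReal.one_lt_top).ne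
  have hcμ' : 0 < ∫ x, w x ∂μ := by rw [← aux_bind_univ_toReal Q hsub μ]; exact hcμ
  have hcν' : 0 < ∫ x, w x ∂ν := by rw [← aux_bind_univ_toReal Q hsub ν]; exact hcν
  haveI : Nonempty {f : E → ℝ // Measurable f ∧ ∀ x, |f x| ≤ 1} :=
    ⟨⟨0, measurable_const, fun x => by simp⟩⟩
  rw [tvDist]
  refine ciSup_le ?_
  rintro ⟨f, hfm, hfb⟩
  simp only
  -- inner integral and its normalization
  set g : E → ℝ := fun x => ∫ y, f y ∂(Q x) with hg_def
  set G : E → ℝ := fun x => (w x)⁻¹ * g x with hG_def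
  have hg_meas : Measurable g := by
    have hsm : StronglyMeasurable (Function.uncurry fun (_ : E) (y : E) => f y) :=
      hfm.stronglyMeasurable.comp_measurable measurable_snd
    exact (hsm.integral_kernel_prod_right (κ := Q)).measurable
  have hg_bound : ∀ x, |g x| ≤ w x := fun x => aux_abs_integral_le hfb
  have hG_meas : Measurable G := (hw_meas.inv).mul hg_meas
  have hG_bound : ∀ x, |G x| ≤ 1 := by
    intro x
    rw [hG_def]
    simp only
    rw [abs_mul, abs_of_nonneg (inv_nonneg.mpr (hw_pos x).le)]
    rw [inv_mul_le_iff₀ (hw_pos x), mul_one]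
    exact hg_bound x
  have hwG : ∀ x, w x * G x = g x := by
    intro x
    rw [hG_def]
    simp only
    rw [← mul_assoc, mul_inv_cancel₀ (hw_pos x).ne', one_mul]
  -- normalized kernel integrals
  have hnorm : ∀ x, ∫ y, f y ∂((Q x Set.univ)⁻¹ • Q x) = G x := by
    intro x
    rw [integral_smul_measure, ENNReal.toReal_inv, smul_eq_mul]
  -- pairwise bound on G
  have hB : ∀ x y, |G x - G y| ≤ ε := by
    intro x y
    haveI hPx : IsProbabilityMeasure ((Q x Set.univ)⁻¹ • Q x) :=
      ⟨by rw [Measure.smul_apply, smul_eq_mul, ENNReal.inv_mul_cancel (hQne x) (hQnt x)]⟩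
    haveI hPy : IsProbabilityMeasure ((Q y Set.univ)⁻¹ • Q y) :=
      ⟨by rw [Measure.smul_apply, smul_eq_mul, ENNReal.inv_mul_cancel (hQne y) (hQnt y)]⟩
    have hxy := h x y
    unfold tvDist at hxy
    have hle := le_ciSup (aux_tv_bddAbove ((Q x Set.univ)⁻¹ • Q x) ((Q y Set.univ)⁻¹ • Q y))
      (⟨f, hfm, hfb⟩ : {f : E → ℝ // Measurable f ∧ ∀ x, |f x| ≤ 1})
    simp only at hle
    rw [hnorm x, hnorm y] at hle
    exact hle.trans hxy
  -- integrability facts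
  have hint_w_μ : Integrable w μ :=
    aux_integrable_of_bound hw_meas fun x => by rw [abs_of_nonneg (hw_pos x).le]; exact hw_le1 x
  have hint_w_ν : Integrable w ν :=
    aux_integrable_of_bound hw_meas fun x => by rw [abs_of_nonneg (hw_pos x).le]; exact hw_le1 x
  have hint_g_μ : Integrable g μ :=
    aux_integrable_of_bound hg_meas fun x => (hg_bound x).trans (hw_le1 x)
  have hint_g_ν : Integrable g ν :=
    aux_integrable_of_bound hg_meas fun x => (hg_bound x).trans (hw_le1 x)
  -- the mean against ν
  set m : ℝ := (∫ x, w x ∂ν)⁻¹ * ∫ x, g x ∂ν with hm_def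
  -- Claim D : |G x - m| ≤ ε for all x
  have hD : ∀ x, |G x - m| ≤ ε := by
    intro x
    have hid : ∫ y, w y * (G x - G y) ∂ν = G x * ∫ y, w y ∂ν - ∫ y, g y ∂ν := by
      have e1 : ∀ y, w y * (G x - G y) = w y * G x - g y := by
        intro y
        rw [mul_sub, hwG y]
      rw [integral_congr_ae (Filter.Eventually.of_forall e1),
        integral_sub (hint_w_ν.mul_const (G x)) hint_g_ν, integral_mul_const]
      ring_nf
    have hid2 : G x - m = (∫ y, w y ∂ν)⁻¹ * ∫ y, w y * (G x - G y) ∂ν := by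
      rw [hid, hm_def]
      field_simp
    rw [hid2]
    exact aux_weighted_bound hw_meas (fun y => (hw_pos y).le) hw_le1 hcν' hε
      ((measurable_const.sub hG_meas)) (fun y => hB x y)
  -- Claim E : the final bound
  have hmain : |(∫ x, w x ∂μ)⁻¹ * ∫ x, g x ∂μ - m| ≤ ε := by
    have hid : ∫ x, w x * (G x - m) ∂μ = ∫ x, g x ∂μ - m * ∫ x, w x ∂μ := by
      have e1 : ∀ x, w x * (G x - m) = g x - w x * m := by
        intro x
        rw [mul_sub, hwG x]
      rw [integral_congr_ae (Filter.Eventually.of_forall e1),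
        integral_sub hint_g_μ (hint_w_μ.mul_const m), integral_mul_const]
      ring
    have hid2 : (∫ x, w x ∂μ)⁻¹ * ∫ x, g x ∂μ - m =
        (∫ x, w x ∂μ)⁻¹ * ∫ x, w x * (G x - m) ∂μ := by
      rw [hid, mul_sub]
      rw [show (∫ x, w x ∂μ)⁻¹ * (m * ∫ x, w x ∂μ) = m by
        rw [mul_comm m, ← mul_assoc, inv_mul_cancel₀ hcμ'.ne', one_mul]]
    rw [hid2]
    exact aux_weighted_bound hw_meas (fun y => (hw_pos y).le) hw_le1 hcμ' hε
      (hG_meas.sub measurable_const) (fun x => hD x)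
  -- rewrite the goal
  have hLμ : ∫ z, f z ∂(((μ.bind (fun a => Q a)) Set.univ)⁻¹ • μ.bind (fun a => Q a)) =
      (∫ x, w x ∂μ)⁻¹ * ∫ x, g x ∂μ := by
    rw [integral_smul_measure, ENNReal.toReal_inv, smul_eq_mul,
      aux_bind_univ_toReal Q hsub μ, aux_integral_bind Q hsub μ hfm hfb]
  have hLν : ∫ z, f z ∂(((ν.bind (fun a => Q a)) Set.univ)⁻¹ • ν.bind (fun a => Q a)) =
      (∫ x, w x ∂ν)⁻¹ * ∫ x, g x ∂ν := by
    rw [integral_smul_measure, ENNReal.toReal_inv, smul_eq_mul,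
      aux_bind_univ_toReal Q hsub ν, aux_integral_bind Q hsub ν hfm hfb]
  rw [hLμ, hLν]
  exact hmain
end

section
/- Let (Q_{s,t})_{0≤s≤t} be an evolution operator of sub-Markov kernels on a measurable space E, let Π > 0, and assume time-periodicity: Q_{s+Π,t+Π} = Q_{s,t} for all 0 ≤ s ≤ t. Let A ⊆ E be measurable and c > 0 be such that (i) Q_{s,t}1(x) ≤ 2 Q_{s,t}1_A(x) for all x ∈ E whenever t ≥ s + 1, and (ii) Q_{t,t+Π}1(x) ≥ c for all t ≥ 0 and all x ∈ A. Then for all s, t with t ≥ s + Π + 1, ‖Q_{s+Π,t}1‖∞ ≤ (2/c)‖Q_{s,t}1‖∞. -/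
open MeasureTheory ProbabilityTheory

/-- For a time-periodic evolution operator of sub-Markov kernels
satisfying (i) `Q_{s,t}1 ≤ 2 Q_{s,t}1_A` for `t ≥ s + 1` and (ii)
`Q_{t,t+Π}1 ≥ c` on `A`, one has `‖Q_{s+Π,t}1‖∞ ≤ (2/c)‖Q_{s,t}1‖∞` whenever
`t ≥ s + Π + 1`. -/
theorem sup_survival_shift_bound
    {E : Type*} [MeasurableSpace E]
    (Q : ℝ → ℝ → Kernel E E)
    (hsub : ∀ s t, 0 ≤ s → s ≤ t → ∀ x, Q s t x Set.univ ≤ 1)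
    (hev : ∀ u s t, 0 ≤ u → u ≤ s → s ≤ t → ∀ x : E,
      (Q u s x).bind (fun y => Q s t y) = Q u t x)
    (p : ℝ) (hp : 0 < p)
    (hper : ∀ s t, 0 ≤ s → s ≤ t → Q (s + p) (t + p) = Q s t)
    (A : Set E) (hA : MeasurableSet A)
    (c : ℝ) (hc : 0 < c)
    (h1 : ∀ s t, 0 ≤ s → s + 1 ≤ t → ∀ x, Q s t x Set.univ ≤ 2 * Q s t x A)
    (h2 : ∀ t, 0 ≤ t → ∀ x ∈ A, ENNReal.ofReal c ≤ Q t (t + p) x Set.univ) :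
    ∀ s t, 0 ≤ s → s + p + 1 ≤ t →
      (⨆ x, Q (s + p) t x Set.univ)
        ≤ ENNReal.ofReal (2 / c) * ⨆ x, Q s t x Set.univ := by
  intro s t hs hst
  have hp' : (0:ℝ) ≤ p := hp.le
  have hsp : 0 ≤ s + p := by linarith
  have hspt : s + p ≤ t := by linarith
  have ht : 0 ≤ t := by linarith
  have hst' : s ≤ t := by linarith
  have hocne : ENNReal.ofReal c ≠ 0 := by
    simp [ENNReal.ofReal_eq_zero, not_le, hc]
  have hoctop : ENNReal.ofReal c ≠ ⊤ := ENNReal.ofReal_ne_top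
  refine iSup_le fun y => ?_
  -- Step 1: Q_{s+p,t}1(y) ≤ 2 Q_{s+p,t}(y, A)
  have step1 : Q (s + p) t y Set.univ ≤ 2 * Q (s + p) t y A :=
    h1 (s + p) t hsp (by linarith) y
  -- Step 2: ofReal c * Q_{s+p,t}(y, A) ≤ Q_{s+p,t+p}(y, univ)
  have step2 : ENNReal.ofReal c * Q (s + p) t y A ≤ Q (s + p) (t + p) y Set.univ := by
    rw [← hev (s + p) t (t + p) hsp hspt (by linarith) y,
      Measure.bind_apply MeasurableSet.univ (Kernel.measurable _).aemeasurable]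
    calc ENNReal.ofReal c * Q (s + p) t y A
        = ∫⁻ z in A, ENNReal.ofReal c ∂(Q (s + p) t y) := by
          rw [setLIntegral_const, mul_comm]
      _ ≤ ∫⁻ z in A, Q t (t + p) z Set.univ ∂(Q (s + p) t y) :=
          setLIntegral_mono (Kernel.measurable_coe _ MeasurableSet.univ)
            (fun z hz => h2 t ht z hz)
      _ ≤ ∫⁻ z, Q t (t + p) z Set.univ ∂(Q (s + p) t y) :=
          setLIntegral_le_lintegral _ _
  -- Step 3: periodicity
  rw [hper s t hs hst'] at step2
  have step2' : Q (s + p) t y A ≤ Q s t y Set.univ / ENNReal.ofReal c :=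
    (ENNReal.le_div_iff_mul_le (Or.inl hocne) (Or.inl hoctop)).2
      (by rwa [mul_comm])
  have key : Q (s + p) t y Set.univ ≤ ENNReal.ofReal (2 / c) * Q s t y Set.univ := by
    calc Q (s + p) t y Set.univ ≤ 2 * Q (s + p) t y A := step1
      _ ≤ 2 * (Q s t y Set.univ / ENNReal.ofReal c) := by
          exact mul_le_mul_right step2' 2
      _ = ENNReal.ofReal (2 / c) * Q s t y Set.univ := by
          rw [ENNReal.ofReal_div_of_pos hc, div_eq_mul_inv, div_eq_mul_inv,
            mul_comm (Q s t y Set.univ) _, ← mul_assoc]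
          norm_num
  exact key.trans (mul_le_mul_right (le_iSup (fun x => Q s t x Set.univ) y) _)
end

section
/- Let D ⊆ ℝ^d, let (Q_{s,t})_{0≤s≤t} be an evolution operator of sub-Markov kernels on D, and let Π > 0, K > 0 and M ≥ 1 be such that: (i) for every s ≥ 0, every bounded measurable f : D → ℝ and all y₁, y₂ ∈ D, |Q_{s,s+Π}f(y₁) − Q_{s,s+Π}f(y₂)| ≤ K ‖f‖∞ |y₁ − y₂|; (ii) for all s, t with t ≥ s + Π + 1, ‖Q_{s+Π,t}1‖∞ ≤ M ‖Q_{s,t}1‖∞. Set r₀ = 1/(2KM). Then for all s, t with t ≥ s + Π + 1, if x_{s,t} ∈ D satisfies Q_{s,t}1(x_{s,t}) = ‖Q_{s,t}1‖∞, then Q_{s,t}1(y) ≥ (1/2)‖Q_{s,t}1‖∞ for every y ∈ D with |y − x_{s,t}| ≤ r₀. -/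
open MeasureTheory ProbabilityTheory

/-- For an evolution operator of sub-Markov kernels on `D ⊆ ℝ^d`
such that (i) `Q_{s,s+Π}` is `K‖f‖∞`-Lipschitz and (ii)
`‖Q_{s+Π,t}1‖∞ ≤ M‖Q_{s,t}1‖∞` for `t ≥ s + Π + 1`, the survival probability
`Q_{s,t}1` is at least half its supremum on the ball of radius `r₀ = 1/(2KM)`
around a maximizing point. -/
theorem survival_half_sup_near_max
    {d : ℕ} (D : Set (EuclideanSpace ℝ (Fin d)))
    (Q : ℝ → ℝ → Kernel D D)
    (hsub : ∀ s t, 0 ≤ s → s ≤ t → ∀ x, Q s t x Set.univ ≤ 1)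
    (hev : ∀ u s t, 0 ≤ u → u ≤ s → s ≤ t → ∀ x : D,
      (Q u s x).bind (fun y => Q s t y) = Q u t x)
    (p K M : ℝ) (hp : 0 < p) (hK : 0 < K) (hM : 1 ≤ M)
    (h1 : ∀ s, 0 ≤ s → ∀ f : D → ℝ, Measurable f → ∀ C : ℝ, (∀ x, |f x| ≤ C) →
      ∀ y₁ y₂ : D,
        |(∫ z, f z ∂(Q s (s + p) y₁)) - ∫ z, f z ∂(Q s (s + p) y₂)|
          ≤ K * C * dist y₁ y₂)
    (h2 : ∀ s t, 0 ≤ s → s + p + 1 ≤ t →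
      (⨆ x, (Q (s + p) t x Set.univ).toReal) ≤ M * ⨆ x, (Q s t x Set.univ).toReal) :
    ∀ s t, 0 ≤ s → s + p + 1 ≤ t → ∀ xst : D,
      (Q s t xst Set.univ).toReal = (⨆ x, (Q s t x Set.univ).toReal) →
      ∀ y : D, dist y xst ≤ 1 / (2 * K * M) →
        (1 / 2) * (⨆ x, (Q s t x Set.univ).toReal) ≤ (Q s t y Set.univ).toReal := by
  intro s t hs hst xst hmax y hy
  haveI : Nonempty D := ⟨xst⟩
  have hsp : (0:ℝ) ≤ s + p := by linarith
  have hspt : s + p ≤ t := by linarith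
  have hst' : s ≤ t := by linarith
  set S : ℝ := ⨆ x, (Q s t x Set.univ).toReal with hS
  set S' : ℝ := ⨆ x, (Q (s + p) t x Set.univ).toReal with hS'
  have hbdd : BddAbove (Set.range fun x : D => (Q (s + p) t x Set.univ).toReal) := by
    refine ⟨1, ?_⟩
    rintro _ ⟨x, rfl⟩
    simpa using ENNReal.toReal_mono ENNReal.one_ne_top (hsub _ _ hsp hspt x)
  have hbddS : BddAbove (Set.range fun x : D => (Q s t x Set.univ).toReal) := by
    refine ⟨1, ?_⟩
    rintro _ ⟨x, rfl⟩
    simpa using ENNReal.toReal_mono ENNReal.one_ne_top (hsub _ _ hs hst' x)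
  have hSnonneg : 0 ≤ S := le_trans ENNReal.toReal_nonneg (le_ciSup hbddS xst)
  set f : D → ℝ := fun z => (Q (s + p) t z Set.univ).toReal with hf
  have hfmeas : Measurable f :=
    (Kernel.measurable_coe (Q (s + p) t) MeasurableSet.univ).ennreal_toReal
  have hfb : ∀ x, |f x| ≤ S' := by
    intro x
    rw [abs_of_nonneg ENNReal.toReal_nonneg]
    exact le_ciSup hbdd x
  -- identify ∫ f with Q s t · univ
  have key : ∀ x : D, (∫ z, f z ∂(Q s (s + p) x)) = (Q s t x Set.univ).toReal := by
    intro x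
    have hb := hev s (s + p) t hs (by linarith) hspt x
    have h2' : (Q s t x) Set.univ
        = ∫⁻ z, (Q (s + p) t z) Set.univ ∂(Q s (s + p) x) := by
      rw [← hb, Measure.bind_apply MeasurableSet.univ
        (Kernel.measurable (Q (s + p) t)).aemeasurable]
    rw [h2', ← integral_toReal
      ((Kernel.measurable_coe (Q (s + p) t) MeasurableSet.univ)).aemeasurable]
    exact Filter.Eventually.of_forall fun z =>
      lt_of_le_of_lt (hsub _ _ hsp hspt z) ENNReal.one_lt_top
  have hlip := h1 s hs f hfmeas S' hfb y xst
  rw [key y, key xst, hmax] at hlip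
  have hS'le : S' ≤ M * S := h2 s t hs hst
  have hdist : (0:ℝ) ≤ dist y xst := dist_nonneg
  have hKM : (0:ℝ) < 2 * K * M := by positivity
  have hstep : K * S' * dist y xst ≤ (1 / 2) * S := by
    have h1' : K * S' * dist y xst ≤ K * (M * S) * dist y xst := by
      have : K * S' ≤ K * (M * S) := by nlinarith
      nlinarith
    have h2'' : K * (M * S) * dist y xst ≤ K * (M * S) * (1 / (2 * K * M)) := by
      have : 0 ≤ K * (M * S) := by positivity
      exact mul_le_mul_of_nonneg_left hy this
    have h3 : K * (M * S) * (1 / (2 * K * M)) = (1 / 2) * S := by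
      field_simp
    linarith
  have := abs_le.mp hlip
  linarith
end

section
/- Let P and R be sub-Markov kernels on a measurable space E, let B ⊆ E be measurable, let c > 0, and let (y₁,y₂) ↦ μ^{y₁,y₂} be a measurable family of probability measures on E indexed by (y₁,y₂) ∈ B × B such that for all (y₁,y₂) ∈ B × B, for i = 1, 2 and every nonnegative bounded measurable f : E → ℝ, Rf(y_i) ≥ c · μ^{y₁,y₂}(f). Let x₁, x₂ ∈ E satisfy P1_B(x₁) > 0 and P1_B(x₂) > 0, and define the probability measure ν on E by ν(f) = (∫_B ∫_B μ^{y₁,y₂}(f) P(x₁,dy₁) P(x₂,dy₂)) / (P1_B(x₁) · P1_B(x₂)). Then for i = 1, 2 and every nonnegative bounded measurable f, P(Rf)(x_i) ≥ c · P1_B(x_i) · ν(f). -/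
open MeasureTheory ProbabilityTheory

/-- The probability measure `ν` defined by
`ν(f) = (∫_B ∫_B μ^{y₁,y₂}(f) P(x₁,dy₁) P(x₂,dy₂)) / (P1_B(x₁) · P1_B(x₂))`. -/
noncomputable def averagedMeasure {E : Type*} [MeasurableSpace E]
    (P : Kernel E E) (B : Set E) (μ : E → E → Measure E) (x₁ x₂ : E) : Measure E :=
  (P x₁ B * P x₂ B)⁻¹ •
    ((((P x₁).restrict B).prod ((P x₂).restrict B)).bind (fun p => μ p.1 p.2))

/-- If `Rf(y_i) ≥ c μ^{y₁,y₂}(f)` for all `(y₁,y₂) ∈ B × B`, then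
`P(Rf)(x_i) ≥ c · P1_B(x_i) · ν(f)` for `i = 1,2`, where `ν` is the averaged
measure built from the family `μ^{y₁,y₂}` through `P(x₁,·)` and `P(x₂,·)`. -/
theorem averaged_minorization
    {E : Type*} [MeasurableSpace E]
    (P R : Kernel E E)
    (hPsub : ∀ x, P x Set.univ ≤ 1) (hRsub : ∀ x, R x Set.univ ≤ 1)
    (B : Set E) (hB : MeasurableSet B)
    (c : ℝ) (hc : 0 < c)
    (μ : E → E → Measure E)
    (hμmeas : ∀ A : Set E, MeasurableSet A → Measurable (fun q : E × E => μ q.1 q.2 A))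
    (hμprob : ∀ y₁ ∈ B, ∀ y₂ ∈ B, IsProbabilityMeasure (μ y₁ y₂))
    (hmin : ∀ y₁ ∈ B, ∀ y₂ ∈ B,
      ∀ f : E → ℝ, Measurable f → (∀ z, 0 ≤ f z) → (∃ C, ∀ z, f z ≤ C) →
        c * (∫ z, f z ∂(μ y₁ y₂)) ≤ (∫ z, f z ∂(R y₁)) ∧
        c * (∫ z, f z ∂(μ y₁ y₂)) ≤ ∫ z, f z ∂(R y₂))
    (x₁ x₂ : E) (h₁ : 0 < P x₁ B) (h₂ : 0 < P x₂ B) :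
    ∀ f : E → ℝ, Measurable f → (∀ z, 0 ≤ f z) → (∃ C, ∀ z, f z ≤ C) →
      c * (P x₁ B).toReal * (∫ z, f z ∂(averagedMeasure P B μ x₁ x₂))
          ≤ (∫ y, (∫ z, f z ∂(R y)) ∂(P x₁)) ∧
      c * (P x₂ B).toReal * (∫ z, f z ∂(averagedMeasure P B μ x₁ x₂))
          ≤ ∫ y, (∫ z, f z ∂(R y)) ∂(P x₂) := by
  haveI hPfin : IsFiniteKernel P := ⟨⟨1, ENNReal.one_lt_top, hPsub⟩⟩
  haveI hRfin : IsFiniteKernel R := ⟨⟨1, ENNReal.one_lt_top, hRsub⟩⟩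
  rintro f hf hf0 ⟨C, hC⟩
  have hg : Measurable (fun z => ENNReal.ofReal (f z)) := hf.ennreal_ofReal
  have hκ : Measurable (fun p : E × E => μ p.1 p.2) :=
    Measure.measurable_of_measurable_coe _ (fun A hA => hμmeas A hA)
  set m₁ : Measure E := (P x₁).restrict B with hm₁
  set m₂ : Measure E := (P x₂).restrict B with hm₂
  set π : Measure (E × E) := m₁.prod m₂ with hπ
  -- general bound for sub-probability measures
  have hbound : ∀ m : Measure E, m Set.univ ≤ 1 →
      ∫⁻ z, ENNReal.ofReal (f z) ∂m ≤ ENNReal.ofReal C := by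
    intro m hm
    calc ∫⁻ z, ENNReal.ofReal (f z) ∂m
        ≤ ∫⁻ _, ENNReal.ofReal C ∂m :=
          lintegral_mono fun z => ENNReal.ofReal_le_ofReal (hC z)
      _ = ENNReal.ofReal C * m Set.univ := lintegral_const _
      _ ≤ ENNReal.ofReal C * 1 := mul_le_mul_right hm _
      _ = ENNReal.ofReal C := mul_one _
  set h : E → ENNReal := fun y => ∫⁻ z, ENNReal.ofReal (f z) ∂(R y) with hh_def
  have hh : Measurable h := (Measure.measurable_lintegral hg).comp (Kernel.measurable R)
  have hRtop : ∀ y, h y ≠ ⊤ := fun y =>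
    ((hbound _ (hRsub y)).trans_lt ENNReal.ofReal_lt_top).ne
  have hinner : Measurable (fun p : E × E => ∫⁻ z, ENNReal.ofReal (f z) ∂(μ p.1 p.2)) :=
    (Measure.measurable_lintegral hg).comp hκ
  set I : ENNReal := ∫⁻ p, (∫⁻ z, ENNReal.ofReal (f z) ∂(μ p.1 p.2)) ∂π with hI_def
  -- almost every point of π lies in B × B
  have hm₁c : m₁ Bᶜ = 0 := by rw [hm₁, Measure.restrict_apply hB.compl]; simp
  have hm₂c : m₂ Bᶜ = 0 := by rw [hm₂, Measure.restrict_apply hB.compl]; simp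
  have hae : ∀ᵐ p ∂π, p.1 ∈ B ∧ p.2 ∈ B := by
    rw [ae_iff]
    have hset : {p : E × E | ¬(p.1 ∈ B ∧ p.2 ∈ B)} ⊆ (Bᶜ ×ˢ Set.univ) ∪ (Set.univ ×ˢ Bᶜ) := by
      intro p hp
      simp only [Set.mem_setOf_eq, not_and_or] at hp
      rcases hp with hp | hp
      · exact Or.inl ⟨hp, trivial⟩
      · exact Or.inr ⟨trivial, hp⟩
    refine measure_mono_null hset (le_antisymm ((measure_union_le _ _).trans ?_) zero_le)
    rw [hπ, Measure.prod_prod, Measure.prod_prod, hm₁c, hm₂c]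
    simp
  -- key pointwise inequality
  have hkey : ∀ y₁' ∈ B, ∀ y₂' ∈ B,
      ENNReal.ofReal c * (∫⁻ z, ENNReal.ofReal (f z) ∂(μ y₁' y₂')) ≤ h y₁' ∧
      ENNReal.ofReal c * (∫⁻ z, ENNReal.ofReal (f z) ∂(μ y₁' y₂')) ≤ h y₂' := by
    intro y₁' hy₁ y₂' hy₂
    haveI := hμprob y₁' hy₁ y₂' hy₂
    have hμtop : ∫⁻ z, ENNReal.ofReal (f z) ∂(μ y₁' y₂') ≠ ⊤ :=
      ((hbound _ (le_of_eq measure_univ)).trans_lt ENNReal.ofReal_lt_top).ne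
    have eμ : ∫ z, f z ∂(μ y₁' y₂') = (∫⁻ z, ENNReal.ofReal (f z) ∂(μ y₁' y₂')).toReal :=
      integral_eq_lintegral_of_nonneg_ae (Filter.Eventually.of_forall hf0)
        hf.aestronglyMeasurable
    have eR : ∀ y, ∫ z, f z ∂(R y) = (h y).toReal := fun y =>
      integral_eq_lintegral_of_nonneg_ae (Filter.Eventually.of_forall hf0)
        hf.aestronglyMeasurable
    obtain ⟨hm1, hm2⟩ := hmin y₁' hy₁ y₂' hy₂ f hf hf0 ⟨C, hC⟩
    rw [eμ, eR] at hm1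
    rw [eμ, eR] at hm2
    constructor
    · rw [← ENNReal.toReal_le_toReal
        (ENNReal.mul_ne_top ENNReal.ofReal_ne_top hμtop) (hRtop _),
        ENNReal.toReal_mul, ENNReal.toReal_ofReal hc.le]
      exact hm1
    · rw [← ENNReal.toReal_le_toReal
        (ENNReal.mul_ne_top ENNReal.ofReal_ne_top hμtop) (hRtop _),
        ENNReal.toReal_mul, ENNReal.toReal_ofReal hc.le]
      exact hm2
  -- finiteness of the various integrals
  have ha_top : P x₁ B ≠ ⊤ :=
    (((measure_mono (Set.subset_univ B)).trans (hPsub x₁)).trans_lt ENNReal.one_lt_top).ne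
  have hb_top : P x₂ B ≠ ⊤ :=
    (((measure_mono (Set.subset_univ B)).trans (hPsub x₂)).trans_lt ENNReal.one_lt_top).ne
  have hm₁univ : m₁ Set.univ = P x₁ B := by
    rw [hm₁, Measure.restrict_apply_univ]
  have hm₂univ : m₂ Set.univ = P x₂ B := by
    rw [hm₂, Measure.restrict_apply_univ]
  have hItop : I ≠ ⊤ := by
    have hle : I ≤ ENNReal.ofReal C * π Set.univ := by
      rw [hI_def]
      calc ∫⁻ p, (∫⁻ z, ENNReal.ofReal (f z) ∂(μ p.1 p.2)) ∂π
          ≤ ∫⁻ _, ENNReal.ofReal C ∂π := by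
            refine lintegral_mono_ae (hae.mono fun p hp => ?_)
            haveI := hμprob p.1 hp.1 p.2 hp.2
            exact hbound _ (le_of_eq measure_univ)
        _ = ENNReal.ofReal C * π Set.univ := lintegral_const _
    exact (hle.trans_lt (ENNReal.mul_lt_top ENNReal.ofReal_lt_top (measure_lt_top π _))).ne
  have hJtop : ∀ x, (∫⁻ y, h y ∂(P x)) ≠ ⊤ := by
    intro x
    have hle : (∫⁻ y, h y ∂(P x)) ≤ ENNReal.ofReal C := by
      calc ∫⁻ y, h y ∂(P x) ≤ ∫⁻ _, ENNReal.ofReal C ∂(P x) :=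
            lintegral_mono fun y => hbound _ (hRsub y)
        _ = ENNReal.ofReal C * P x Set.univ := lintegral_const _
        _ ≤ ENNReal.ofReal C * 1 := mul_le_mul_right (hPsub x) _
        _ = ENNReal.ofReal C := mul_one _
    exact (hle.trans_lt ENNReal.ofReal_lt_top).ne
  -- the two ENNReal chains
  have chain1 : ENNReal.ofReal c * I ≤ (∫⁻ y, h y ∂(P x₁)) * (P x₂ B) := by
    calc ENNReal.ofReal c * I
        = ∫⁻ p, ENNReal.ofReal c * (∫⁻ z, ENNReal.ofReal (f z) ∂(μ p.1 p.2)) ∂π :=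
          (lintegral_const_mul _ hinner).symm
      _ ≤ ∫⁻ p, h p.1 ∂π :=
          lintegral_mono_ae (hae.mono fun p hp => (hkey p.1 hp.1 p.2 hp.2).1)
      _ = ∫⁻ y₁', ∫⁻ _, h y₁' ∂m₂ ∂m₁ :=
          lintegral_prod _ (hh.comp measurable_fst).aemeasurable
      _ = ∫⁻ y₁', h y₁' * m₂ Set.univ ∂m₁ := by
          simp [lintegral_const]
      _ = (∫⁻ y₁', h y₁' ∂m₁) * m₂ Set.univ := lintegral_mul_const _ hh
      _ = (∫⁻ y₁', h y₁' ∂m₁) * (P x₂ B) := by rw [hm₂univ]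
      _ ≤ (∫⁻ y, h y ∂(P x₁)) * (P x₂ B) :=
          mul_le_mul_left (lintegral_mono' Measure.restrict_le_self le_rfl) _
  have chain2 : ENNReal.ofReal c * I ≤ (∫⁻ y, h y ∂(P x₂)) * (P x₁ B) := by
    calc ENNReal.ofReal c * I
        = ∫⁻ p, ENNReal.ofReal c * (∫⁻ z, ENNReal.ofReal (f z) ∂(μ p.1 p.2)) ∂π :=
          (lintegral_const_mul _ hinner).symm
      _ ≤ ∫⁻ p, h p.2 ∂π :=
          lintegral_mono_ae (hae.mono fun p hp => (hkey p.1 hp.1 p.2 hp.2).2)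
      _ = ∫⁻ _, ∫⁻ y₂', h y₂' ∂m₂ ∂m₁ :=
          lintegral_prod _ (hh.comp measurable_snd).aemeasurable
      _ = (∫⁻ y₂', h y₂' ∂m₂) * m₁ Set.univ := lintegral_const _
      _ = (∫⁻ y₂', h y₂' ∂m₂) * (P x₁ B) := by rw [hm₁univ]
      _ ≤ (∫⁻ y, h y ∂(P x₂)) * (P x₁ B) :=
          mul_le_mul_left (lintegral_mono' Measure.restrict_le_self le_rfl) _
  -- identify the Bochner integrals with lintegrals
  have eν : ∫ z, f z ∂(averagedMeasure P B μ x₁ x₂) = ((P x₁ B * P x₂ B)⁻¹ * I).toReal := by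
    rw [integral_eq_lintegral_of_nonneg_ae (Filter.Eventually.of_forall hf0)
      hf.aestronglyMeasurable]
    congr 1
    rw [averagedMeasure, lintegral_smul_measure, Measure.lintegral_bind hκ.aemeasurable hg.aemeasurable]
    rfl
  have eRint : ∀ x, (∫ y, (∫ z, f z ∂(R y)) ∂(P x)) = (∫⁻ y, h y ∂(P x)).toReal := by
    intro x
    have e1 : ∀ y, ∫ z, f z ∂(R y) = (h y).toReal := fun y =>
      integral_eq_lintegral_of_nonneg_ae (Filter.Eventually.of_forall hf0)
        hf.aestronglyMeasurable
    simp_rw [e1]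
    rw [integral_eq_lintegral_of_nonneg_ae
      (Filter.Eventually.of_forall fun y => ENNReal.toReal_nonneg)
      hh.ennreal_toReal.aestronglyMeasurable]
    congr 1
    exact lintegral_congr fun y => ENNReal.ofReal_toReal (hRtop y)
  -- real-number endgame
  have final : ∀ (a b J : ENNReal), a ≠ ⊤ → b ≠ ⊤ → 0 < a → 0 < b → J ≠ ⊤ →
      ENNReal.ofReal c * I ≤ J * b →
      c * a.toReal * (((a * b)⁻¹) * I).toReal ≤ J.toReal := by
    intro a b J hat hbt ha hb hJt hcb
    have h1 : c * I.toReal ≤ J.toReal * b.toReal := by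
      calc c * I.toReal = (ENNReal.ofReal c * I).toReal := by
            rw [ENNReal.toReal_mul, ENNReal.toReal_ofReal hc.le]
        _ ≤ (J * b).toReal := ENNReal.toReal_mono (ENNReal.mul_ne_top hJt hbt) hcb
        _ = J.toReal * b.toReal := ENNReal.toReal_mul
    have hA : 0 < a.toReal := ENNReal.toReal_pos ha.ne' hat
    have hBt : 0 < b.toReal := ENNReal.toReal_pos hb.ne' hbt
    have e : (((a * b)⁻¹) * I).toReal = (a.toReal * b.toReal)⁻¹ * I.toReal := by
      rw [ENNReal.toReal_mul, ENNReal.toReal_inv, ENNReal.toReal_mul]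
    rw [e]
    have e2 : c * a.toReal * ((a.toReal * b.toReal)⁻¹ * I.toReal)
        = (c * I.toReal) / b.toReal := by
      field_simp
    rw [e2, div_le_iff₀ hBt]
    exact h1
  constructor
  · rw [eν, eRint x₁]
    exact final (P x₁ B) (P x₂ B) _ ha_top hb_top h₁ h₂ (hJtop x₁) chain1
  · rw [eν, eRint x₂, mul_comm (P x₁ B) (P x₂ B)]
    exact final (P x₂ B) (P x₁ B) _ hb_top ha_top h₂ h₁ (hJtop x₂) chain2
end

section
/- Let Q be a sub-Markov kernel on a measurable space E, let x ∈ E, let β > 0 and ε > 0, let ν be a probability measure on E, let B ⊆ E be measurable with ν(B) ≥ ε, and let g : E → ℝ be a nonnegative bounded measurable function with ‖g‖∞ > 0 and g(y) ≥ (1/2)‖g‖∞ for all y ∈ B. Assume that Qf(x) ≥ β · Q1(x) · ν(f) for every nonnegative bounded measurable f : E → ℝ, and that Q(g)(x) > 0. Then for every nonnegative bounded measurable f, Q(f·g)(x) / Q(g)(x) ≥ (βε/2) · η(f), where η is the probability measure defined by η(A) = ν(A ∩ B)/ν(B). -/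
open MeasureTheory ProbabilityTheory

/-- If `Qf(x) ≥ β Q1(x) ν(f)` for all nonnegative bounded measurable
`f`, `ν(B) ≥ ε`, and `g ≥ (1/2)‖g‖∞ > 0` on `B`, then
`Q(fg)(x)/Q(g)(x) ≥ (βε/2) η(f)` where `η = ν(· ∩ B)/ν(B)`. -/
theorem conditioned_kernel_minorization
    {E : Type*} [MeasurableSpace E]
    (Q : Kernel E E) (hsub : ∀ x, Q x Set.univ ≤ 1)
    (x : E) (β ε : ℝ) (hβ : 0 < β) (hε : 0 < ε)
    (ν : Measure E) [IsProbabilityMeasure ν]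
    (B : Set E) (hB : MeasurableSet B) (hνB : ENNReal.ofReal ε ≤ ν B)
    (g : E → ℝ) (hg : Measurable g) (hg0 : ∀ z, 0 ≤ g z)
    (hgbdd : BddAbove (Set.range g))
    (hgsup : 0 < ⨆ z, g z)
    (hgB : ∀ y ∈ B, (1 / 2) * (⨆ z, g z) ≤ g y)
    (hmin : ∀ f : E → ℝ, Measurable f → (∀ z, 0 ≤ f z) → (∃ C, ∀ z, f z ≤ C) →
      β * (Q x Set.univ).toReal * (∫ z, f z ∂ν) ≤ ∫ z, f z ∂(Q x))
    (hQg : 0 < ∫ z, g z ∂(Q x)) :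
    ∀ f : E → ℝ, Measurable f → (∀ z, 0 ≤ f z) → (∃ C, ∀ z, f z ≤ C) →
      (β * ε / 2) * (∫ z, f z ∂((ν B)⁻¹ • ν.restrict B))
        ≤ (∫ z, f z * g z ∂(Q x)) / ∫ z, g z ∂(Q x) := by
  intro f hf hf0 ⟨C, hC⟩
  haveI : IsFiniteMeasure (Q x) := ⟨(hsub x).trans_lt ENNReal.one_lt_top⟩
  set M : ℝ := ⨆ z, g z with hM
  have hgM : ∀ z, g z ≤ M := fun z => le_ciSup hgbdd z
  have hC0 : 0 ≤ C := le_trans (hf0 x) (hC x)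
  -- integrability facts
  have hintf : Integrable f ν := by
    refine Integrable.mono' (integrable_const C) hf.aestronglyMeasurable ?_
    filter_upwards with z
    rw [Real.norm_eq_abs, abs_of_nonneg (hf0 z)]; exact hC z
  have hintfg : Integrable (fun z => f z * g z) ν := by
    refine Integrable.mono' (integrable_const (C * M)) (hf.mul hg).aestronglyMeasurable ?_
    filter_upwards with z
    rw [Real.norm_eq_abs, abs_of_nonneg (mul_nonneg (hf0 z) (hg0 z))]
    exact mul_le_mul (hC z) (hgM z) (hg0 z) hC0
  have hintg : Integrable g (Q x) := by
    refine Integrable.mono' (integrable_const M) hg.aestronglyMeasurable ?_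
    filter_upwards with z
    rw [Real.norm_eq_abs, abs_of_nonneg (hg0 z)]; exact hgM z
  set T : ℝ := (Q x Set.univ).toReal with hT
  have hT0 : 0 ≤ T := ENNReal.toReal_nonneg
  -- ∫ g d(Q x) ≤ M * T
  have hgQ : ∫ z, g z ∂(Q x) ≤ M * T := by
    calc ∫ z, g z ∂(Q x) ≤ ∫ _, M ∂(Q x) :=
          integral_mono hintg (integrable_const M) hgM
      _ = T * M := by simp [integral_const, hT, smul_eq_mul, measureReal_def]
      _ = M * T := mul_comm _ _
  set IB : ℝ := ∫ z in B, f z ∂ν with hIB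
  have hIB0 : 0 ≤ IB := setIntegral_nonneg hB (fun z _ => hf0 z)
  -- main chain
  have h1 : (M / 2) * IB ≤ ∫ z in B, f z * g z ∂ν := by
    have h1' : ∫ z in B, (M / 2) • f z ∂ν ≤ ∫ z in B, f z * g z ∂ν := by
      refine setIntegral_mono_on ((hintf.smul (M/2)).integrableOn) hintfg.integrableOn hB ?_
      intro y hy
      simp only [smul_eq_mul]
      calc M / 2 * f y = f y * ((1/2) * M) := by ring
        _ ≤ f y * g y := mul_le_mul_of_nonneg_left (hgB y hy) (hf0 y)
    rw [integral_smul, smul_eq_mul] at h1'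
    exact h1'
  have h2 : ∫ z in B, f z * g z ∂ν ≤ ∫ z, f z * g z ∂ν :=
    setIntegral_le_integral hintfg (Filter.Eventually.of_forall fun z => mul_nonneg (hf0 z) (hg0 z))
  have h3 : β * T * (∫ z, f z * g z ∂ν) ≤ ∫ z, f z * g z ∂(Q x) :=
    hmin _ (hf.mul hg) (fun z => mul_nonneg (hf0 z) (hg0 z))
      ⟨C * M, fun z => mul_le_mul (hC z) (hgM z) (hg0 z) hC0⟩
  have hkey : β * T * ((M / 2) * IB) ≤ ∫ z, f z * g z ∂(Q x) := by
    refine le_trans ?_ h3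
    exact mul_le_mul_of_nonneg_left (h1.trans h2) (by positivity)
  -- ε * (ν B).toReal⁻¹ ≤ 1
  have hνB' : ε ≤ (ν B).toReal :=
    (ENNReal.ofReal_le_iff_le_toReal (measure_ne_top ν B)).mp hνB
  have hνBpos : 0 < (ν B).toReal := lt_of_lt_of_le hε hνB'
  have hεν : ε * ((ν B).toReal)⁻¹ ≤ 1 := by
    rw [← div_eq_mul_inv, div_le_one hνBpos]; exact hνB'
  -- rewrite LHS
  have hLHS : ∫ z, f z ∂((ν B)⁻¹ • ν.restrict B) = ((ν B).toReal)⁻¹ * IB := by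
    rw [integral_smul_measure, ENNReal.toReal_inv, smul_eq_mul]
  rw [hLHS, le_div_iff₀ hQg]
  -- (β/2) * IB * K ≤ J where K ≤ M*T
  have hKQ : (β * ε / 2) * (((ν B).toReal)⁻¹ * IB) * (∫ z, g z ∂(Q x))
      ≤ β * T * ((M / 2) * IB) := by
    have h4 : (β * ε / 2) * (((ν B).toReal)⁻¹ * IB) ≤ (β / 2) * IB := by
      have hh := mul_le_mul_of_nonneg_left hεν (show (0:ℝ) ≤ β / 2 * IB by positivity)
      calc β * ε / 2 * (((ν B).toReal)⁻¹ * IB) = β / 2 * IB * (ε * ((ν B).toReal)⁻¹) := by ring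
        _ ≤ β / 2 * IB * 1 := hh
        _ = β / 2 * IB := by ring
    have h5 : (β / 2) * IB * (∫ z, g z ∂(Q x)) ≤ (β / 2) * IB * (M * T) :=
      mul_le_mul_of_nonneg_left hgQ (by positivity)
    calc (β * ε / 2) * (((ν B).toReal)⁻¹ * IB) * (∫ z, g z ∂(Q x))
        ≤ (β / 2) * IB * (∫ z, g z ∂(Q x)) :=
          mul_le_mul_of_nonneg_right h4 hQg.le
      _ ≤ (β / 2) * IB * (M * T) := h5
      _ = β * T * ((M / 2) * IB) := by ring
  exact hKQ.trans hkey
end
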